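/- Let d ≥ 1 and let ψ : ℝ^d → ℝ^d be twice continuously differentiable with ‖Dψ(x)‖ ≤ c < 1 and ‖D²ψ(x)‖ ≤ K for all x ∈ ℝ^d (operator norms), and suppose φ(x) = x + ψ(x) is bijective. Then φ⁻¹ is twice differentiable and its second derivative satisfies ‖D²(φ⁻¹)(y)‖ ≤ K (1 − c)⁻³ for every y ∈ ℝ^d. -/

import Mathlib

section Aux

variable {E : Type*} [NormedAddCommGroup E] [NormedSpace ℝ E] [CompleteSpace E]

set_option maxHeartbeats 1000000 in
set_option synthInstance.maxHeartbeats 400000 in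
theorem inv_sec_deriv_aux
    (ψ : E → E)
    (hψ : ContDiff ℝ 2 ψ)
    (c : ℝ) (hc0 : 0 ≤ c) (hc1 : c < 1)
    (hDψ : ∀ x, ‖fderiv ℝ ψ x‖ ≤ c)
    (K : ℝ)
    (hD2ψ : ∀ x, ‖fderiv ℝ (fderiv ℝ ψ) x‖ ≤ K)
    (φ : E → E)
    (hφ : ∀ x, φ x = x + ψ x)
    (hbij : Function.Bijective φ) :
    Differentiable ℝ (Function.invFun φ) ∧
    Differentiable ℝ (fderiv ℝ (Function.invFun φ)) ∧
    ∀ y, ‖fderiv ℝ (fderiv ℝ (Function.invFun φ)) y‖ ≤ K * ((1 - c)⁻¹) ^ 3 := by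
  set g := Function.invFun φ with hg
  have hgr : Function.RightInverse g φ := Function.rightInverse_invFun hbij.2
  have h1c : (0:ℝ) < 1 - c := by linarith
  have hψd : Differentiable ℝ ψ := hψ.differentiable two_ne_zero
  -- derivative of φ
  have hφder : ∀ x, HasFDerivAt φ (1 + fderiv ℝ ψ x) x := by
    intro x
    have : HasFDerivAt (fun x => x + ψ x)
        (ContinuousLinearMap.id ℝ E + fderiv ℝ ψ x) x :=
      (hasFDerivAt_id x).add (hψd x).hasFDerivAt
    have hfe : φ = fun x => x + ψ x := funext hφ
    rw [hfe]
    exact this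
  -- an abstract two-sided inverse for 1 + Dψ x
  have hBex : ∃ B : E → (E →L[ℝ] E),
      ∀ x, (1 + fderiv ℝ ψ x) * B x = 1 ∧ B x * (1 + fderiv ℝ ψ x) = 1 := by
    have hlt : ∀ x, ‖-(fderiv ℝ ψ x)‖ < 1 := by
      intro x; rw [norm_neg]; exact lt_of_le_of_lt (hDψ x) hc1
    refine ⟨fun x => ↑(Units.oneSub (-(fderiv ℝ ψ x)) (hlt x))⁻¹, fun x => ?_⟩
    have hval : (Units.oneSub (-(fderiv ℝ ψ x)) (hlt x) : E →L[ℝ] E)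
        = 1 + fderiv ℝ ψ x := by
      rw [Units.val_oneSub, sub_neg_eq_add]
    constructor
    · rw [← hval, ← Units.val_mul, mul_inv_cancel, Units.val_one]
    · rw [← hval, ← Units.val_mul, inv_mul_cancel, Units.val_one]
  obtain ⟨B, hB⟩ := hBex
  -- the unit
  let u : E → (E →L[ℝ] E)ˣ := fun x =>
    ⟨1 + fderiv ℝ ψ x, B x, (hB x).1, (hB x).2⟩
  -- ψ is Lipschitz with constant c
  have hψlip : ∀ x y, ‖ψ x - ψ y‖ ≤ c * ‖x - y‖ := by
    intro x y
    exact convex_univ.norm_image_sub_le_of_norm_fderiv_le (fun z _ => hψd z)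
      (fun z _ => hDψ z) trivial trivial
  -- φ expands distances
  have hexp : ∀ x y, (1 - c) * ‖x - y‖ ≤ ‖φ x - φ y‖ := by
    intro x y
    have h1 : φ x - φ y = (x - y) + (ψ x - ψ y) := by
      rw [hφ x, hφ y]; abel
    have h2 := norm_add_le ((x - y) + (ψ x - ψ y)) (-(ψ x - ψ y))
    rw [add_neg_cancel_right, norm_neg] at h2
    have := hψlip x y
    rw [h1]; nlinarith [norm_nonneg (x - y)]
  -- g is Lipschitz hence continuous
  have hglip : ∀ a b, ‖g a - g b‖ ≤ (1 - c)⁻¹ * ‖a - b‖ := by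
    intro a b
    have := hexp (g a) (g b)
    rw [hgr a, hgr b] at this
    exact (le_inv_mul_iff₀ h1c).mpr this
  have hgcont : Continuous g := by
    apply LipschitzWith.continuous (K := ⟨(1-c)⁻¹, by positivity⟩)
    apply LipschitzWith.of_dist_le_mul
    intro a b
    rw [dist_eq_norm, dist_eq_norm]; exact hglip a b
  -- key elementwise bound on the inverse
  have hinvb : ∀ x (v : E), ‖B x v‖ ≤ (1 - c)⁻¹ * ‖v‖ := by
    intro x v
    set w := B x v with hw
    have h1 : (1 + fderiv ℝ ψ x : E →L[ℝ] E) w = v := by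
      have := congrFun (congrArg DFunLike.coe (hB x).1) v
      simpa [ContinuousLinearMap.mul_apply] using this
    have h2 : (1 - c) * ‖w‖ ≤ ‖v‖ := by
      rw [← h1]
      have he : (1 + fderiv ℝ ψ x : E →L[ℝ] E) w = w + fderiv ℝ ψ x w := rfl
      rw [he]
      have h3 := norm_add_le (w + fderiv ℝ ψ x w) (-(fderiv ℝ ψ x w))
      rw [add_neg_cancel_right, norm_neg] at h3
      have h4 : ‖fderiv ℝ ψ x w‖ ≤ c * ‖w‖ :=
        le_trans ((fderiv ℝ ψ x).le_opNorm w)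
          (mul_le_mul_of_nonneg_right (hDψ x) (norm_nonneg w))
      nlinarith [norm_nonneg w]
    exact (le_inv_mul_iff₀ h1c).mpr h2
  -- derivative of g
  have hgder : ∀ y, HasFDerivAt g (B (g y)) y := by
    intro y
    have hf' : HasFDerivAt φ
        ((ContinuousLinearEquiv.unitsEquiv ℝ E (u (g y)) : E →L[ℝ] E)) (g y) := by
      have hcoe : (ContinuousLinearEquiv.unitsEquiv ℝ E (u (g y)) : E →L[ℝ] E)
          = 1 + fderiv ℝ ψ (g y) := rfl
      rw [hcoe]
      exact hφder (g y)
    have := HasFDerivAt.of_local_left_inverse (hgcont.continuousAt) hf'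
      (Filter.Eventually.of_forall hgr)
    have hs : ((ContinuousLinearEquiv.unitsEquiv ℝ E (u (g y))).symm : E →L[ℝ] E)
        = B (g y) := rfl
    rwa [hs] at this
  have hgdiff : Differentiable ℝ g := fun y => (hgder y).differentiableAt
  -- formula for fderiv g
  have hfg : fderiv ℝ g = fun y => B (g y) := funext fun y => (hgder y).fderiv
  -- derivative of x ↦ B x along g, via Ring.inverse
  have hψ1 : ContDiff ℝ 1 (fderiv ℝ ψ) := hψ.fderiv_right (le_refl _)
  have hNder : ∀ x, HasFDerivAt (fun x => (1 : E →L[ℝ] E) + fderiv ℝ ψ x)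
      (fderiv ℝ (fderiv ℝ ψ) x) x := by
    intro x
    have h1 : HasFDerivAt (fderiv ℝ ψ) (fderiv ℝ (fderiv ℝ ψ) x) x :=
      (hψ1.differentiable one_ne_zero x).hasFDerivAt
    have h2 := (hasFDerivAt_const (1 : E →L[ℝ] E) x).add h1
    rw [zero_add] at h2
    exact h2
  have hBinv : ∀ x, B x = Ring.inverse ((1 : E →L[ℝ] E) + fderiv ℝ ψ x) :=
    fun x => (Ring.inverse_unit (u x)).symm
  have hD2g : ∀ y, HasFDerivAt (fderiv ℝ g)
      ((-(ContinuousLinearMap.mulLeftRight ℝ (E →L[ℝ] E)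
          (B (g y)) (B (g y)))).comp
        ((fderiv ℝ (fderiv ℝ ψ) (g y)).comp (B (g y)))) y := by
    intro y
    have hfg2 : fderiv ℝ g = fun y => Ring.inverse ((1 : E →L[ℝ] E) + fderiv ℝ ψ (g y)) := by
      rw [hfg]; funext z; exact hBinv (g z)
    rw [hfg2]
    have hinv : HasFDerivAt Ring.inverse
        (-(ContinuousLinearMap.mulLeftRight ℝ (E →L[ℝ] E)
          (B (g y)) (B (g y))))
        ((1 : E →L[ℝ] E) + fderiv ℝ ψ (g y)) := by
      have h := hasFDerivAt_ringInverse (𝕜 := ℝ) (u (g y))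
      have h1 : Units.val ((u (g y))⁻¹) = B (g y) := rfl
      have h2 : Units.val (u (g y)) = (1 : E →L[ℝ] E) + fderiv ℝ ψ (g y) := rfl
      rw [h1, h2] at h
      exact h
    have hcomp1 : HasFDerivAt (fun y => (1 : E →L[ℝ] E) + fderiv ℝ ψ (g y))
        ((fderiv ℝ (fderiv ℝ ψ) (g y)).comp (B (g y))) y :=
      (hNder (g y)).comp y (hgder y)
    exact hinv.comp y hcomp1
  have hK0 : 0 ≤ K := le_trans (norm_nonneg _) (hD2ψ 0)
  refine ⟨hgdiff, fun y => (hD2g y).differentiableAt, fun y => ?_⟩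
  rw [(hD2g y).fderiv]
  apply ContinuousLinearMap.opNorm_le_bound
  · positivity
  intro v
  rw [ContinuousLinearMap.comp_apply, ContinuousLinearMap.comp_apply]
  set M := fderiv ℝ (fderiv ℝ ψ) (g y) (B (g y) v) with hM
  have happ : (-(ContinuousLinearMap.mulLeftRight ℝ (E →L[ℝ] E) (B (g y)) (B (g y)))) M
      = -(B (g y) * M * B (g y)) := by
    simp [ContinuousLinearMap.mulLeftRight_apply]
  rw [happ, norm_neg]
  have hMnorm : ‖M‖ ≤ K * ((1 - c)⁻¹ * ‖v‖) := by
    calc ‖M‖ ≤ ‖fderiv ℝ (fderiv ℝ ψ) (g y)‖ * ‖B (g y) v‖ :=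
          (fderiv ℝ (fderiv ℝ ψ) (g y)).le_opNorm (B (g y) v)
      _ ≤ K * ((1 - c)⁻¹ * ‖v‖) :=
          mul_le_mul (hD2ψ (g y)) (hinvb (g y) v) (norm_nonneg _) hK0
  have hBMB : ‖B (g y) * M * B (g y)‖ ≤ (1 - c)⁻¹ * (‖M‖ * ((1 - c)⁻¹ * 1)) := by
    apply ContinuousLinearMap.opNorm_le_bound _ (by positivity)
    intro w
    have h1 : (B (g y) * M * B (g y)) w = B (g y) (M (B (g y) w)) := rfl
    rw [h1]
    calc ‖B (g y) (M (B (g y) w))‖ ≤ (1 - c)⁻¹ * ‖M (B (g y) w)‖ := hinvb (g y) _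
      _ ≤ (1 - c)⁻¹ * (‖M‖ * ‖B (g y) w‖) :=
          mul_le_mul_of_nonneg_left (M.le_opNorm (B (g y) w)) (by positivity)
      _ ≤ (1 - c)⁻¹ * (‖M‖ * ((1 - c)⁻¹ * ‖w‖)) := by
          gcongr
          exact hinvb (g y) _
      _ = (1 - c)⁻¹ * (‖M‖ * ((1 - c)⁻¹ * 1)) * ‖w‖ := by ring
  calc ‖B (g y) * M * B (g y)‖ ≤ (1 - c)⁻¹ * (‖M‖ * ((1 - c)⁻¹ * 1)) := hBMB
    _ ≤ (1 - c)⁻¹ * ((K * ((1 - c)⁻¹ * ‖v‖)) * ((1 - c)⁻¹ * 1)) := by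
        gcongr
    _ = K * ((1 - c)⁻¹) ^ 3 * ‖v‖ := by ring

end Aux

/-- If `ψ : ℝ^d → ℝ^d` is `C²` with `‖Dψ(x)‖ ≤ c < 1` and `‖D²ψ(x)‖ ≤ K`
everywhere, and `φ = id + ψ` is bijective, then `φ⁻¹` is twice differentiable and
`‖D²(φ⁻¹)(y)‖ ≤ K (1-c)⁻³` for every `y`. -/
theorem inverse_second_derivative_bound
    (d : ℕ) (hd : 1 ≤ d)
    (ψ : EuclideanSpace ℝ (Fin d) → EuclideanSpace ℝ (Fin d))
    (hψ : ContDiff ℝ 2 ψ)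
    (c : ℝ) (hc0 : 0 ≤ c) (hc1 : c < 1)
    (hDψ : ∀ x, ‖fderiv ℝ ψ x‖ ≤ c)
    (K : ℝ)
    (hD2ψ : ∀ x, ‖fderiv ℝ (fderiv ℝ ψ) x‖ ≤ K)
    (φ : EuclideanSpace ℝ (Fin d) → EuclideanSpace ℝ (Fin d))
    (hφ : ∀ x, φ x = x + ψ x)
    (hbij : Function.Bijective φ) :
    Differentiable ℝ (Function.invFun φ) ∧
    Differentiable ℝ (fderiv ℝ (Function.invFun φ)) ∧
    ∀ y, ‖fderiv ℝ (fderiv ℝ (Function.invFun φ)) y‖ ≤ K * ((1 - c)⁻¹) ^ 3 :=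
  inv_sec_deriv_aux ψ hψ c hc0 hc1 hDψ K hD2ψ φ hφ hbij
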